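/- Let θ : (Fin d → ℝ) → ℝ be measurable with θ(x) > 0 for Lebesgue-almost every x. Let Λ₁ and Λ₂ be class-constant, symmetric, positive-definite matrices in Matrix ι ι ℝ, and set q_l(x) := G(x)ᵀ Λ_l G(x) for l = 1, 2 (both everywhere positive). Assume that for each l and all i j : ι the function x ↦ (G x) i * (G x) j * θ(x) / q_l(x) is Lebesgue integrable. If ∫ (G x) i * (G x) j * θ(x) / q₁(x) dx = ∫ (G x) i * (G x) j * θ(x) / q₂(x) dx for all i j : ι (i.e. ω(Λ₁) = ω(Λ₂)), then Λ₁ = Λ₂. (This is the injectivity part of Theorem 4.4: the moment map ω : Λ ↦ ∫ G(x) (θ(x)/q(x,Λ)) G(x)ᵀ dx is injective on positive-definite class-constant matrices.) -/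

import Mathlib

open MeasureTheory

/-- The monomial vector `G(x) = G(x₁) ⊗ ⋯ ⊗ G(x_d)`. -/
noncomputable def Gvec (n d : ℕ) (x : Fin d → ℝ) (i : Fin d → Fin (n + 1)) : ℝ :=
  ∏ t, x t ^ (i t : ℕ)

/-- The quadratic form `q(x, Λ) = G(x)ᵀ Λ G(x)`. -/
noncomputable def quadForm (n d : ℕ)
    (Λ : Matrix (Fin d → Fin (n + 1)) (Fin d → Fin (n + 1)) ℝ)
    (x : Fin d → ℝ) : ℝ :=
  ∑ i, ∑ j, Gvec n d x i * Λ i j * Gvec n d x j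

/-- Class-constant matrices: all entries corresponding to the same power moment
are equal (the paper's parametrization (21)). -/
def ClassConstant (n d : ℕ)
    (Λ : Matrix (Fin d → Fin (n + 1)) (Fin d → Fin (n + 1)) ℝ) : Prop :=
  ∀ i j i' j' : Fin d → Fin (n + 1),
    (∀ t, (i t : ℕ) + (j t : ℕ) = (i' t : ℕ) + (j' t : ℕ)) → Λ i j = Λ i' j'

/-- `∑ᵢⱼ Λᵢⱼ ⬝ (Gᵢ Gⱼ θ / q_M) = q_Λ θ / q_M` pointwise. -/
lemma key_sum (n d : ℕ) (Λ M : Matrix (Fin d → Fin (n + 1)) (Fin d → Fin (n + 1)) ℝ)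
    (θ : (Fin d → ℝ) → ℝ) (x : Fin d → ℝ) :
    ∑ i, ∑ j, Λ i j * (Gvec n d x i * Gvec n d x j * θ x / quadForm n d M x)
      = quadForm n d Λ x * θ x / quadForm n d M x := by
  simp only [quadForm, Finset.sum_mul, Finset.sum_div]
  refine Finset.sum_congr rfl fun i _ => Finset.sum_congr rfl fun j _ => ?_
  ring

lemma integrable_quad (n d : ℕ) (Λ M : Matrix (Fin d → Fin (n + 1)) (Fin d → Fin (n + 1)) ℝ)
    (θ : (Fin d → ℝ) → ℝ)
    (hint : ∀ i j, Integrable (fun x : Fin d → ℝ =>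
      Gvec n d x i * Gvec n d x j * θ x / quadForm n d M x)) :
    Integrable (fun x : Fin d → ℝ => quadForm n d Λ x * θ x / quadForm n d M x) := by
  have : (fun x : Fin d → ℝ => quadForm n d Λ x * θ x / quadForm n d M x)
      = fun x => ∑ i, ∑ j, Λ i j * (Gvec n d x i * Gvec n d x j * θ x / quadForm n d M x) :=
    funext fun x => (key_sum n d Λ M θ x).symm
  rw [this]
  exact integrable_finset_sum _ fun i _ => integrable_finset_sum _ fun j _ => (hint i j).const_mul _

lemma integral_quad (n d : ℕ) (Λ M : Matrix (Fin d → Fin (n + 1)) (Fin d → Fin (n + 1)) ℝ)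
    (θ : (Fin d → ℝ) → ℝ)
    (hint : ∀ i j, Integrable (fun x : Fin d → ℝ =>
      Gvec n d x i * Gvec n d x j * θ x / quadForm n d M x)) :
    (∫ x : Fin d → ℝ, quadForm n d Λ x * θ x / quadForm n d M x)
      = ∑ i, ∑ j, Λ i j * ∫ x : Fin d → ℝ,
          Gvec n d x i * Gvec n d x j * θ x / quadForm n d M x := by
  have : (fun x : Fin d → ℝ => quadForm n d Λ x * θ x / quadForm n d M x)
      = fun x => ∑ i, ∑ j, Λ i j * (Gvec n d x i * Gvec n d x j * θ x / quadForm n d M x) :=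
    funext fun x => (key_sum n d Λ M θ x).symm
  rw [this, integral_finset_sum _ (f := fun i x => ∑ j, Λ i j * (Gvec n d x i * Gvec n d x j * θ x / quadForm n d M x)) fun i _ =>
    integrable_finset_sum _ fun j _ => (hint i j).const_mul _]
  refine Finset.sum_congr rfl fun i _ => ?_
  rw [integral_finset_sum _ (f := fun j x => Λ i j * (Gvec n d x i * Gvec n d x j * θ x / quadForm n d M x)) fun j _ => (hint i j).const_mul _]
  exact Finset.sum_congr rfl fun j _ => integral_const_mul _ _

/-- The exponent multi-index of the monomial `Gᵢ Gⱼ`. -/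
noncomputable def expF {n d : ℕ} (i j : Fin d → Fin (n + 1)) : Fin d →₀ ℕ :=
  Finsupp.equivFunOnFinite.symm (fun t => (i t : ℕ) + (j t : ℕ))

lemma expF_apply {n d : ℕ} (i j : Fin d → Fin (n + 1)) (t : Fin d) :
    expF i j t = (i t : ℕ) + (j t : ℕ) := rfl

lemma expF_eq_iff {n d : ℕ} (i j i' j' : Fin d → Fin (n + 1)) :
    expF i j = expF i' j' ↔ ∀ t, (i t : ℕ) + (j t : ℕ) = (i' t : ℕ) + (j' t : ℕ) := by
  constructor
  · intro h t
    have := DFunLike.congr_fun h t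
    simpa [expF_apply] using this
  · intro h
    ext t
    simp [expF_apply, h t]

/-- The polynomial whose evaluation is the quadratic form. -/
noncomputable def Pmat {n d : ℕ}
    (Λ : Matrix (Fin d → Fin (n + 1)) (Fin d → Fin (n + 1)) ℝ) : MvPolynomial (Fin d) ℝ :=
  ∑ i, ∑ j, MvPolynomial.monomial (expF i j) (Λ i j)

lemma eval_Pmat {n d : ℕ} (Λ : Matrix (Fin d → Fin (n + 1)) (Fin d → Fin (n + 1)) ℝ)
    (x : Fin d → ℝ) : MvPolynomial.eval x (Pmat Λ) = quadForm n d Λ x := by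
  simp only [Pmat, quadForm, map_sum, MvPolynomial.eval_monomial]
  refine Finset.sum_congr rfl fun i _ => Finset.sum_congr rfl fun j _ => ?_
  rw [Finsupp.prod_fintype _ _ (fun t => pow_zero (x t))]
  simp only [expF_apply, pow_add, Gvec, Finset.prod_mul_distrib]
  ring

/-- Class-constant matrices with equal quadratic forms are equal. -/
lemma matrices_eq_of_quad_eq {n d : ℕ}
    (Λ₁ Λ₂ : Matrix (Fin d → Fin (n + 1)) (Fin d → Fin (n + 1)) ℝ)
    (hcc₁ : ClassConstant n d Λ₁) (hcc₂ : ClassConstant n d Λ₂)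
    (h : ∀ x, quadForm n d Λ₁ x = quadForm n d Λ₂ x) : Λ₁ = Λ₂ := by
  classical
  have hP : Pmat Λ₁ = Pmat Λ₂ :=
    MvPolynomial.funext fun x => by rw [eval_Pmat, eval_Pmat, h x]
  ext i₀ j₀
  have hco := congrArg (MvPolynomial.coeff (expF i₀ j₀)) hP
  have key : ∀ (Λ : Matrix (Fin d → Fin (n + 1)) (Fin d → Fin (n + 1)) ℝ),
      ClassConstant n d Λ →
      MvPolynomial.coeff (expF i₀ j₀) (Pmat Λ)
        = (∑ i : Fin d → Fin (n+1), ∑ j : Fin d → Fin (n+1),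
            if expF i j = expF i₀ j₀ then (1:ℝ) else 0) * Λ i₀ j₀ := by
    intro Λ hcc
    simp only [Pmat, MvPolynomial.coeff_sum, MvPolynomial.coeff_monomial, Finset.sum_mul]
    refine Finset.sum_congr rfl fun i _ => Finset.sum_congr rfl fun j _ => ?_
    by_cases hij : expF i j = expF i₀ j₀
    · rw [if_pos hij, if_pos hij, one_mul]
      exact hcc i j i₀ j₀ ((expF_eq_iff i j i₀ j₀).mp hij)
    · rw [if_neg hij, if_neg hij, zero_mul]
  rw [key Λ₁ hcc₁, key Λ₂ hcc₂] at hco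
  have hN : (0:ℝ) < ∑ i : Fin d → Fin (n+1), ∑ j : Fin d → Fin (n+1),
      if expF i j = expF i₀ j₀ then (1:ℝ) else 0 := by
    have h1 : (1:ℝ) ≤ ∑ j, if expF i₀ j = expF i₀ j₀ then (1:ℝ) else 0 := by
      have := Finset.single_le_sum (f := fun j => if expF i₀ j = expF i₀ j₀ then (1:ℝ) else 0)
        (fun j _ => by split <;> norm_num) (Finset.mem_univ j₀)
      simpa using this
    have h2 : (∑ j, if expF i₀ j = expF i₀ j₀ then (1:ℝ) else 0)
        ≤ ∑ i : Fin d → Fin (n+1), ∑ j : Fin d → Fin (n+1),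
            if expF i j = expF i₀ j₀ then (1:ℝ) else 0 :=
      Finset.single_le_sum
        (f := fun i => ∑ j, if expF i j = expF i₀ j₀ then (1:ℝ) else 0)
        (fun i _ => Finset.sum_nonneg fun j _ => by split <;> norm_num)
        (Finset.mem_univ i₀)
    linarith
  exact mul_left_cancel₀ (ne_of_gt hN) hco

/-- injectivity part of Theorem 4.4: the moment map
`ω : Λ ↦ ∫ G(x) (θ(x)/q(x,Λ)) G(x)ᵀ dx` is injective on positive-definite
class-constant matrices. -/
theorem moment_map_injective (n d : ℕ) (hd : 1 ≤ d)
    (θ : (Fin d → ℝ) → ℝ) (hθm : Measurable θ)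
    (hθpos : ∀ᵐ x : Fin d → ℝ ∂volume, 0 < θ x)
    (Λ₁ Λ₂ : Matrix (Fin d → Fin (n + 1)) (Fin d → Fin (n + 1)) ℝ)
    (hcc₁ : ClassConstant n d Λ₁) (hcc₂ : ClassConstant n d Λ₂)
    (hsym₁ : Λ₁.transpose = Λ₁) (hsym₂ : Λ₂.transpose = Λ₂)
    (hpd₁ : ∀ v : (Fin d → Fin (n + 1)) → ℝ, v ≠ 0 →
      0 < ∑ i, ∑ j, v i * Λ₁ i j * v j)
    (hpd₂ : ∀ v : (Fin d → Fin (n + 1)) → ℝ, v ≠ 0 →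
      0 < ∑ i, ∑ j, v i * Λ₂ i j * v j)
    (hint₁ : ∀ i j : Fin d → Fin (n + 1),
      Integrable (fun x : Fin d → ℝ =>
        Gvec n d x i * Gvec n d x j * θ x / quadForm n d Λ₁ x))
    (hint₂ : ∀ i j : Fin d → Fin (n + 1),
      Integrable (fun x : Fin d → ℝ =>
        Gvec n d x i * Gvec n d x j * θ x / quadForm n d Λ₂ x))
    (heq : ∀ i j : Fin d → Fin (n + 1),
      (∫ x : Fin d → ℝ, Gvec n d x i * Gvec n d x j * θ x / quadForm n d Λ₁ x) =
      ∫ x : Fin d → ℝ, Gvec n d x i * Gvec n d x j * θ x / quadForm n d Λ₂ x) :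
    Λ₁ = Λ₂ := by
  classical
  have hGne : ∀ x : Fin d → ℝ, Gvec n d x ≠ 0 := by
    intro x hx
    have h0 : Gvec n d x (fun _ => 0) = 1 := by simp [Gvec]
    rw [hx] at h0
    simp at h0
  have hq₁ : ∀ x, 0 < quadForm n d Λ₁ x := fun x => hpd₁ _ (hGne x)
  have hq₂ : ∀ x, 0 < quadForm n d Λ₂ x := fun x => hpd₂ _ (hGne x)
  -- the four auxiliary integrable functions
  have I12 := integrable_quad n d Λ₁ Λ₂ θ hint₂
  have I21 := integrable_quad n d Λ₂ Λ₁ θ hint₁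
  have I11 := integrable_quad n d Λ₁ Λ₁ θ hint₁
  have I22 := integrable_quad n d Λ₂ Λ₂ θ hint₂
  set f : (Fin d → ℝ) → ℝ := fun x => (quadForm n d Λ₁ x - quadForm n d Λ₂ x)^2 * θ x
      / (quadForm n d Λ₁ x * quadForm n d Λ₂ x) with hf
  have hfe : f = fun x =>
      (quadForm n d Λ₁ x * θ x / quadForm n d Λ₂ x
        + quadForm n d Λ₂ x * θ x / quadForm n d Λ₁ x)
      - (quadForm n d Λ₁ x * θ x / quadForm n d Λ₁ x
        + quadForm n d Λ₂ x * θ x / quadForm n d Λ₂ x) := by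
    funext x
    have h1 := (hq₁ x).ne'
    have h2 := (hq₂ x).ne'
    rw [hf]
    field_simp
    ring
  have hintf : Integrable f := by
    rw [hfe]
    exact (I12.add I21).sub (I11.add I22)
  have hint0 : (∫ x : Fin d → ℝ, f x) = 0 := by
    have IL : Integrable (fun x : Fin d → ℝ =>
        quadForm n d Λ₁ x * θ x / quadForm n d Λ₂ x
          + quadForm n d Λ₂ x * θ x / quadForm n d Λ₁ x) := I12.add I21
    have IR : Integrable (fun x : Fin d → ℝ =>
        quadForm n d Λ₁ x * θ x / quadForm n d Λ₁ x
          + quadForm n d Λ₂ x * θ x / quadForm n d Λ₂ x) := I11.add I22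
    rw [hfe]
    beta_reduce
    rw [integral_sub IL IR, integral_add I12 I21,
      integral_add I11 I22, integral_quad n d Λ₁ Λ₂ θ hint₂,
      integral_quad n d Λ₂ Λ₁ θ hint₁, integral_quad n d Λ₁ Λ₁ θ hint₁,
      integral_quad n d Λ₂ Λ₂ θ hint₂]
    simp only [heq]
    ring
  have hnn : 0 ≤ᵐ[volume] f := by
    filter_upwards [hθpos] with x hθx
    exact div_nonneg (mul_nonneg (sq_nonneg _) hθx.le)
      (mul_nonneg (hq₁ x).le (hq₂ x).le)
  have hae : f =ᵐ[volume] 0 := (integral_eq_zero_iff_of_nonneg_ae hnn hintf).mp hint0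
  have hqq : ∀ᵐ x : Fin d → ℝ ∂volume, quadForm n d Λ₁ x = quadForm n d Λ₂ x := by
    filter_upwards [hae, hθpos] with x hfx hθx
    have hden : quadForm n d Λ₁ x * quadForm n d Λ₂ x ≠ 0 :=
      (mul_pos (hq₁ x) (hq₂ x)).ne'
    have hfx0 : f x = 0 := hfx
    rcases div_eq_zero_iff.mp hfx0 with h | h
    · rcases mul_eq_zero.mp h with h' | h'
      · exact sub_eq_zero.mp (sq_eq_zero_iff.mp h')
      · exact absurd h' hθx.ne'
    · exact absurd h hden
  have hGc : ∀ i, Continuous fun x : Fin d → ℝ => Gvec n d x i :=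
    fun i => continuous_finset_prod _ fun t _ => (continuous_apply t).pow _
  have hqc : ∀ Λ : Matrix (Fin d → Fin (n + 1)) (Fin d → Fin (n + 1)) ℝ,
      Continuous (quadForm n d Λ) :=
    fun Λ => continuous_finset_sum _ fun i _ =>
      continuous_finset_sum _ fun j _ => ((hGc i).mul continuous_const).mul (hGc j)
  have hquniv : quadForm n d Λ₁ = quadForm n d Λ₂ :=
    (Continuous.ae_eq_iff_eq volume (hqc Λ₁) (hqc Λ₂)).mp hqq
  exact matrices_eq_of_quad_eq Λ₁ Λ₂ hcc₁ hcc₂ (fun x => congrFun hquniv x)
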